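/- Let p be a prime and x_i = p^{α_i} for i = 1,...,n with α_i nonnegative integers. The GCD matrix S(x_1,...,x_n) is totally nonnegative if and only if the sequence (α_i)_{i=1}^n is monotonic (either non-decreasing or non-increasing). -/

import Mathlib

open Matrix

private lemma minkey_step (k : ℕ)
    (IH : ∀ (g : ℕ → ℝ) (b c : Fin k → ℕ), (∀ t, 0 ≤ g t) → Monotone g →
      Monotone b → Monotone c → 0 ≤ (Matrix.of fun i j => g (min (b i) (c j))).det)
    (g : ℕ → ℝ) (b c : Fin (k+1) → ℕ) (hg0 : ∀ t, 0 ≤ g t) (hg : Monotone g)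
    (hb : Monotone b) (hc : Monotone c) (h0 : b 0 ≤ c 0) :
    0 ≤ (Matrix.of fun i j => g (min (b i) (c j))).det := by
  set M : Matrix (Fin (k+1)) (Fin (k+1)) ℝ := Matrix.of fun i j => g (min (b i) (c j)) with hM
  -- column operation matrix
  set C : Matrix (Fin (k+1)) (Fin (k+1)) ℝ :=
    Matrix.of fun i j => if i = j then (1:ℝ) else if i = 0 then -1 else 0 with hC
  have hCtri : C.BlockTriangular id := by
    intro i j hij
    simp only [hC, Matrix.of_apply, id] at *
    rw [if_neg (by omega : ¬ i = j), if_neg]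
    intro h; subst h; exact absurd hij (by simp)
  have hCdet : C.det = 1 := by
    rw [Matrix.det_of_upperTriangular hCtri]
    apply Finset.prod_eq_one
    intro i _
    simp [hC]
  have hMC : ∀ i j, (M * C) i j = if j = 0 then M i 0 else M i j - M i 0 := by
    intro i j
    rw [Matrix.mul_apply]
    by_cases hj : j = 0
    · subst hj
      rw [Finset.sum_eq_single 0]
      · simp [hC]
      · intro l _ hl; simp [hC, hl]
      · simp
    · rw [Finset.sum_eq_add_of_mem 0 j (by simp) (by simp) (fun h => (hj h.symm).elim) ?_]
      · simp [hC, hj, Ne.symm hj]; ring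
      · intro l _ hne
        have hz : C l j = 0 := by simp [hC, hne.1, hne.2]
        rw [hz, mul_zero]
  have hdet : M.det = (M * C).det := by rw [Matrix.det_mul, hCdet, mul_one]
  rw [hdet, Matrix.det_succ_row_zero]
  -- first row of M*C is (M 0 0, 0, ..., 0)
  have hrow : ∀ j : Fin (k+1), j ≠ 0 → (M * C) 0 j = 0 := by
    intro j hj
    rw [hMC, if_neg hj]
    have h1 : M 0 j = g (b 0) := by
      simp only [hM, Matrix.of_apply]
      congr 1
      have := hc (Fin.zero_le j)
      omega
    have h2 : M 0 0 = g (b 0) := by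
      simp only [hM, Matrix.of_apply]
      congr 1
      omega
    rw [h1, h2, sub_self]
  rw [Finset.sum_eq_single 0]
  · simp only [Fin.val_zero, pow_zero, one_mul, Fin.succAbove_zero]
    have hM00 : (M * C) 0 0 = g (b 0) := by
      rw [hMC, if_pos rfl]
      simp only [hM, Matrix.of_apply]
      congr 1
      omega
    rw [hM00]
    apply mul_nonneg (hg0 _)
    -- the submatrix equals a matrix of the same shape
    have heq : ((M * C).submatrix Fin.succ Fin.succ) =
        Matrix.of fun i j => (fun t => g (max t (c 0)) - g (c 0))
          (min ((b ∘ Fin.succ) i) ((c ∘ Fin.succ) j)) := by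
      ext i j
      simp only [Matrix.submatrix_apply, Matrix.of_apply, Function.comp]
      rw [hMC, if_neg (Fin.succ_ne_zero j)]
      simp only [hM, Matrix.of_apply]
      rcases le_total (b i.succ) (c 0) with h | h
      · have e1 : min (b i.succ) (c j.succ) = b i.succ := by
          have := hc (Fin.zero_le j.succ); omega
        have e2 : min (b i.succ) (c 0) = b i.succ := by omega
        have e3 : max (min (b i.succ) (c j.succ)) (c 0) = c 0 := by
          rw [e1]; omega
        rw [e3, e1, e2, sub_self, sub_self]
      · have e2 : min (b i.succ) (c 0) = c 0 := by omega
        have e3 : max (min (b i.succ) (c j.succ)) (c 0) = min (b i.succ) (c j.succ) := by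
          have := hc (Fin.zero_le j.succ); omega
        rw [e2, e3]
    rw [heq]
    refine IH (fun t => g (max t (c 0)) - g (c 0)) (b ∘ Fin.succ) (c ∘ Fin.succ)
      (fun t => ?_) (fun s t hst => ?_)
      (fun s t hst => hb (Fin.succ_le_succ_iff.mpr hst))
      (fun s t hst => hc (Fin.succ_le_succ_iff.mpr hst))
    · have : g (c 0) ≤ g (max t (c 0)) := hg (le_max_right _ _)
      simpa using this
    · have : g (max s (c 0)) ≤ g (max t (c 0)) := hg (by omega)
      simpa using this
  · intro j _ hj
    rw [hrow j hj, mul_zero, zero_mul]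
  · simp

private lemma minkey : ∀ (k : ℕ) (g : ℕ → ℝ) (b c : Fin k → ℕ), (∀ t, 0 ≤ g t) → Monotone g →
    Monotone b → Monotone c → 0 ≤ (Matrix.of fun i j => g (min (b i) (c j))).det := by
  intro k
  induction k with
  | zero => intro g b c _ _ _ _; simp [Matrix.det_fin_zero]
  | succ k IH =>
    intro g b c hg0 hg hb hc
    rcases le_total (b 0) (c 0) with h | h
    · exact minkey_step k IH g b c hg0 hg hb hc h
    · have : (Matrix.of fun i j => g (min (b i) (c j)) :
          Matrix (Fin (k+1)) (Fin (k+1)) ℝ).det =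
          (Matrix.of fun i j => g (min (c i) (b j)) :
          Matrix (Fin (k+1)) (Fin (k+1)) ℝ).det := by
        rw [← Matrix.det_transpose]
        congr 1
        ext i j
        simp [Matrix.transpose_apply, min_comm]
      rw [this]
      exact minkey_step k IH g c b hg0 hg hc hb h

private lemma sm2 {n : ℕ} {a b : Fin n} (h : a < b) : StrictMono ![a, b] := by
  intro x y hxy
  fin_cases x <;> fin_cases y <;> simp_all

private lemma exists_triple {n : ℕ} {α : Fin n → ℕ} (hm : ¬ Monotone α) (ha : ¬ Antitone α) :
    ∃ i j k : Fin n, i < j ∧ j < k ∧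
      min (α i) (α j) + min (α j) (α k) < min (α i) (α k) + α j := by
  cases n with
  | zero => exact absurd (fun a _ _ => a.elim0) hm
  | succ m =>
    rw [Fin.monotone_iff_le_succ] at hm
    push_neg at hm
    obtain ⟨i, hi⟩ := hm
    rw [Fin.antitone_iff_succ_le] at ha
    push_neg at ha
    obtain ⟨j, hj⟩ := ha
    rcases lt_trichotomy i j with hlt | rfl | hlt
    · -- descent at i, then ascent at j : valley in between
      have hmem : i.succ ∈ Finset.Icc i.succ j.castSucc :=
        Finset.mem_Icc.mpr ⟨le_refl _, Fin.succ_le_castSucc_iff.mpr hlt⟩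
      obtain ⟨w, hw, hwmin⟩ := Finset.exists_min_image _ α ⟨i.succ, hmem⟩
      rw [Finset.mem_Icc] at hw
      refine ⟨i.castSucc, w, j.succ, lt_of_lt_of_le (@Fin.castSucc_lt_succ _ i) hw.1,
        lt_of_le_of_lt hw.2 (@Fin.castSucc_lt_succ _ j), ?_⟩
      have h1 : α w ≤ α i.succ := hwmin _ hmem
      have h2 : α w ≤ α j.castSucc := hwmin _ (Finset.mem_Icc.mpr
        ⟨Fin.succ_le_castSucc_iff.mpr hlt, le_refl _⟩)
      omega
    · omega
    · -- ascent at j, then descent at i : peak in between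
      have hmem : j.succ ∈ Finset.Icc j.succ i.castSucc :=
        Finset.mem_Icc.mpr ⟨le_refl _, Fin.succ_le_castSucc_iff.mpr hlt⟩
      obtain ⟨w, hw, hwmax⟩ := Finset.exists_max_image _ α ⟨j.succ, hmem⟩
      rw [Finset.mem_Icc] at hw
      refine ⟨j.castSucc, w, i.succ, lt_of_lt_of_le (@Fin.castSucc_lt_succ _ j) hw.1,
        lt_of_le_of_lt hw.2 (@Fin.castSucc_lt_succ _ i), ?_⟩
      have h1 : α j.succ ≤ α w := hwmax _ hmem
      have h2 : α i.castSucc ≤ α w := hwmax _ (Finset.mem_Icc.mpr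
        ⟨Fin.succ_le_castSucc_iff.mpr hlt, le_refl _⟩)
      omega

/-- A real matrix is totally nonnegative if every square minor is nonnegative. -/
def TotallyNonneg {n : ℕ} (A : Matrix (Fin n) (Fin n) ℝ) : Prop :=
  ∀ (k : ℕ) (r c : Fin k → Fin n), StrictMono r → StrictMono c →
    0 ≤ (A.submatrix r c).det

theorem gcd_matrix_prime_powers_TN_iff (n : ℕ) (p : ℕ) (hp : p.Prime)
    (α : Fin n → ℕ) (x : Fin n → ℕ) (hx : ∀ i, x i = p ^ α i)
    (S : Matrix (Fin n) (Fin n) ℝ)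
    (hS : ∀ i j, S i j = (Nat.gcd (x i) (x j) : ℝ)) :
    TotallyNonneg S ↔ (Monotone α ∨ Antitone α) := by
  have hp1 : (1:ℝ) < (p:ℝ) := by exact_mod_cast hp.one_lt
  have hSmin : ∀ i j, S i j = (p:ℝ) ^ (min (α i) (α j)) := by
    intro i j
    rw [hS, hx, hx]
    rcases le_total (α i) (α j) with h | h
    · rw [Nat.gcd_eq_left (pow_dvd_pow p h), min_eq_left h]; push_cast; ring
    · rw [Nat.gcd_eq_right (pow_dvd_pow p h), min_eq_right h]; push_cast; ring
  constructor
  · intro hTN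
    by_contra hcon
    push_neg at hcon
    obtain ⟨i, j, k, hij, hjk, hkey⟩ := exists_triple hcon.1 hcon.2
    have hT := hTN 2 ![i, j] ![j, k] (sm2 hij) (sm2 hjk)
    rw [Matrix.det_fin_two] at hT
    simp only [Matrix.submatrix_apply, Matrix.cons_val_zero, Matrix.cons_val_one,
      Matrix.head_cons, hSmin] at hT
    rw [min_self, ← pow_add, ← pow_add] at hT
    have := pow_lt_pow_right₀ hp1 hkey
    linarith
  · have hgpos : ∀ t : ℕ, 0 ≤ (p:ℝ) ^ t := fun t => pow_nonneg (by linarith) t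
    have hgmono : Monotone (fun t : ℕ => (p:ℝ) ^ t) :=
      fun s t hst => pow_le_pow_right₀ (le_of_lt hp1) hst
    rintro (hmono | hanti) k r c hr hc
    · have heq : S.submatrix r c =
          Matrix.of fun i j => (fun t : ℕ => (p:ℝ) ^ t)
            (min ((α ∘ r) i) ((α ∘ c) j)) := by
        ext i j
        simp [Matrix.submatrix_apply, hSmin, Function.comp]
      rw [heq]
      exact minkey k _ _ _ hgpos hgmono
        (fun s t hst => hmono (hr.monotone hst)) (fun s t hst => hmono (hc.monotone hst))
    · rw [← Matrix.det_submatrix_equiv_self Fin.revPerm]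
      have heq : (S.submatrix r c).submatrix Fin.revPerm Fin.revPerm =
          Matrix.of fun i j => (fun t : ℕ => (p:ℝ) ^ t)
            (min ((α ∘ r ∘ Fin.rev) i) ((α ∘ c ∘ Fin.rev) j)) := by
        ext i j
        simp [Matrix.submatrix_apply, hSmin, Function.comp, Fin.revPerm]
      rw [heq]
      exact minkey k _ _ _ hgpos hgmono
        (fun s t hst => hanti (hr.monotone (Fin.rev_le_rev.mpr hst)))
        (fun s t hst => hanti (hc.monotone (Fin.rev_le_rev.mpr hst)))
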